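/- (Bound on the center of mass, Gaussian.) Let μ be the centered isotropic Gaussian measure N(0, σ²I_d) on ℝ^d, i.e., the d-fold product of the one-dimensional Gaussian measure with mean 0 and variance σ². Let S ⊆ ℝ^d be a measurable set with μ(S) > 0, and let c_S := (∫_S x dμ(x)) / μ(S) be its center of mass with respect to μ. Then ‖c_S‖ ≤ 2σ · √(μ(ℝ^d \ S)) / μ(S). -/

import Mathlib

open MeasureTheory Metric Set

noncomputable section

/-- The centered isotropic Gaussian measure `N(0, σ²I_d)` on `ℝ^d`, given by the product of
`d` one-dimensional Gaussian densities with mean `0` and variance `σ²`. -/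
def isoGaussianMeasure (d : ℕ) (σ : ℝ) : Measure (EuclideanSpace ℝ (Fin d)) :=
  volume.withDensity fun x =>
    ∏ i : Fin d,
      ENNReal.ofReal ((Real.sqrt (2 * Real.pi * σ ^ 2))⁻¹ *
        Real.exp (-(x i) ^ 2 / (2 * σ ^ 2)))

open Real Filter
open scoped NNReal ENNReal


/-- 1-d centered Gaussian pdf with variance σ². -/
def cgPdf (σ : ℝ) (t : ℝ) : ℝ :=
  (Real.sqrt (2 * Real.pi * σ ^ 2))⁻¹ * Real.exp (-t ^ 2 / (2 * σ ^ 2))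

variable {σ : ℝ}

lemma cgPdf_nonneg (σ t : ℝ) : 0 ≤ cgPdf σ t := by
  unfold cgPdf; positivity

lemma cgPdf_eq (hσ : 0 < σ) (t : ℝ) :
    cgPdf σ t = (Real.sqrt (2 * Real.pi * σ ^ 2))⁻¹ * Real.exp (-(2 * σ ^ 2)⁻¹ * t ^ 2) := by
  unfold cgPdf
  congr 1
  congr 1
  ring

lemma measurable_cgPdf (σ : ℝ) : Measurable (cgPdf σ) := by
  unfold cgPdf
  fun_prop

lemma integrable_cgPdf (hσ : 0 < σ) : Integrable (cgPdf σ) := by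
  have hb : 0 < (2 * σ ^ 2)⁻¹ := by positivity
  have := (integrable_exp_neg_mul_sq hb).const_mul (Real.sqrt (2 * Real.pi * σ ^ 2))⁻¹
  exact this.congr (by filter_upwards with t; rw [cgPdf_eq hσ])

lemma sqrt_two_pi_sq_pos (hσ : 0 < σ) : 0 < Real.sqrt (2 * Real.pi * σ ^ 2) := by
  apply Real.sqrt_pos.2; positivity

lemma integral_cgPdf (hσ : 0 < σ) : ∫ t, cgPdf σ t = 1 := by
  have hb : 0 < (2 * σ ^ 2)⁻¹ := by positivity
  simp_rw [cgPdf_eq hσ]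
  rw [integral_const_mul, integral_gaussian]
  have h1 : π / (2 * σ ^ 2)⁻¹ = 2 * π * σ ^ 2 := by
    field_simp
  rw [h1, inv_mul_eq_div, div_eq_one_iff_eq (ne_of_gt (sqrt_two_pi_sq_pos hσ))]

lemma integrable_id_mul_cgPdf (hσ : 0 < σ) : Integrable (fun t => cgPdf σ t * t) := by
  have hb : 0 < (2 * σ ^ 2)⁻¹ := by positivity
  have := (integrable_mul_exp_neg_mul_sq hb).const_mul (Real.sqrt (2 * Real.pi * σ ^ 2))⁻¹
  exact this.congr (by filter_upwards with t; rw [cgPdf_eq hσ]; ring)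

lemma integral_id_mul_cgPdf (hσ : 0 < σ) : ∫ t, cgPdf σ t * t = 0 := by
  have h := integral_neg_eq_self (μ := (volume : Measure ℝ)) (f := fun t => cgPdf σ t * t)
  have hodd : ∀ t : ℝ, cgPdf σ (-t) * (-t) = -(cgPdf σ t * t) := by
    intro t
    unfold cgPdf
    rw [neg_pow]
    ring_nf
  simp only [hodd, integral_neg] at h
  linarith

lemma integrable_sq_mul_exp_neg_mul_sq {b : ℝ} (hb : 0 < b) :
    Integrable (fun x : ℝ => x ^ 2 * Real.exp (-b * x ^ 2)) := by
  have h := integrable_rpow_mul_exp_neg_mul_sq hb (s := 2) (by norm_num)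
  refine h.congr ?_
  filter_upwards with x
  rw [show ((2 : ℝ) = ((2 : ℕ) : ℝ)) by norm_num, Real.rpow_natCast]

lemma integral_sq_mul_exp_neg_mul_sq {b : ℝ} (hb : 0 < b) :
    ∫ x : ℝ, x ^ 2 * Real.exp (-b * x ^ 2) = (2 * b)⁻¹ * Real.sqrt (Real.pi / b) := by
  have hb' : b ≠ 0 := ne_of_gt hb
  set f : ℝ → ℝ := fun x => -(2 * b)⁻¹ * (x * Real.exp (-b * x ^ 2)) with hf
  set F' : ℝ → ℝ := fun x =>
    x ^ 2 * Real.exp (-b * x ^ 2) - (2 * b)⁻¹ * Real.exp (-b * x ^ 2) with hF'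
  have hderiv : ∀ x : ℝ, HasDerivAt f (F' x) x := by
    intro x
    have h1 : HasDerivAt (fun x : ℝ => x * Real.exp (-b * x ^ 2))
        (1 * Real.exp (-b * x ^ 2) + x * (Real.exp (-b * x ^ 2) * (-b * (2 * x ^ 1)))) x :=
      (hasDerivAt_id x).mul (((hasDerivAt_pow 2 x).const_mul (-b)).exp)
    have h2 := h1.const_mul (-(2 * b)⁻¹)
    refine h2.congr_deriv ?_
    simp only [hF']
    linear_combination (x ^ 2 * Real.exp (-b * x ^ 2)) * (mul_inv_cancel₀ hb')
  have hint : Integrable F' :=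
    (integrable_sq_mul_exp_neg_mul_sq hb).sub
      ((integrable_exp_neg_mul_sq hb).const_mul _)
  have hintf : Integrable f :=
    (integrable_mul_exp_neg_mul_sq hb).const_mul _
  have h0 : ∫ x, F' x = 0 := integral_eq_zero_of_hasDerivAt_of_integrable hderiv hint hintf
  have hsub : ∫ x, F' x =
      (∫ x : ℝ, x ^ 2 * Real.exp (-b * x ^ 2)) -
        ∫ x : ℝ, (2 * b)⁻¹ * Real.exp (-b * x ^ 2) := by
    exact integral_sub (integrable_sq_mul_exp_neg_mul_sq hb)
      ((integrable_exp_neg_mul_sq hb).const_mul _)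
  rw [hsub] at h0
  rw [integral_const_mul, integral_gaussian] at h0
  linarith

lemma integrable_sq_mul_cgPdf (hσ : 0 < σ) : Integrable (fun t => cgPdf σ t * t ^ 2) := by
  have hb : 0 < (2 * σ ^ 2)⁻¹ := by positivity
  have := (integrable_sq_mul_exp_neg_mul_sq hb).const_mul (Real.sqrt (2 * Real.pi * σ ^ 2))⁻¹
  exact this.congr (by filter_upwards with t; rw [cgPdf_eq hσ]; ring)

lemma integral_sq_mul_cgPdf (hσ : 0 < σ) : ∫ t, cgPdf σ t * t ^ 2 = σ ^ 2 := by
  have hb : 0 < (2 * σ ^ 2)⁻¹ := by positivity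
  have h : ∀ t : ℝ, cgPdf σ t * t ^ 2 =
      (Real.sqrt (2 * Real.pi * σ ^ 2))⁻¹ * (t ^ 2 * Real.exp (-(2 * σ ^ 2)⁻¹ * t ^ 2)) := by
    intro t; rw [cgPdf_eq hσ]; ring
  simp_rw [h]
  rw [integral_const_mul, integral_sq_mul_exp_neg_mul_sq hb]
  have h1 : Real.pi / (2 * σ ^ 2)⁻¹ = 2 * Real.pi * σ ^ 2 := by field_simp
  have h2 : (2 * (2 * σ ^ 2)⁻¹)⁻¹ = σ ^ 2 := by field_simp
  rw [h1, h2]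
  rw [show (Real.sqrt (2 * Real.pi * σ ^ 2))⁻¹ * (σ ^ 2 * Real.sqrt (2 * Real.pi * σ ^ 2))
      = σ ^ 2 * ((Real.sqrt (2 * Real.pi * σ ^ 2))⁻¹ * Real.sqrt (2 * Real.pi * σ ^ 2)) by ring,
    inv_mul_cancel₀ (ne_of_gt (sqrt_two_pi_sq_pos hσ)), mul_one]

variable {d : ℕ} {σ : ℝ}

def EuclideanSpace.measurableEquiv (ι : Type*) [Fintype ι] :
    EuclideanSpace ℝ ι ≃ᵐ (ι → ℝ) :=
  (MeasurableEquiv.toLp 2 (ι → ℝ)).symm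

lemma EuclideanSpace.volume_preserving_measurableEquiv (ι : Type*) [Fintype ι] :
    MeasurePreserving (EuclideanSpace.measurableEquiv ι) :=
  EuclideanSpace.volume_preserving_symm_measurableEquiv_toLp ι

-- test : coordinate measurable, e.symm coords
example (i : Fin d) : Measurable fun x : EuclideanSpace ℝ (Fin d) => x i :=
  (measurable_pi_apply i).comp (WithLp.measurable_ofLp 2 _)

example (z : Fin d → ℝ) (i : Fin d) :
    ((EuclideanSpace.measurableEquiv (Fin d)).symm z) i = z i := rfl

lemma isoGaussian_eq (d : ℕ) (σ : ℝ) (hσ : 0 < σ) : isoGaussianMeasure d σ =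
    volume.withDensity (fun x => ENNReal.ofReal (∏ i, cgPdf σ (x i))) := by
  unfold isoGaussianMeasure
  congr 1
  ext x
  rw [ENNReal.ofReal_prod_of_nonneg (fun i _ => cgPdf_nonneg σ (x i))]
  unfold cgPdf
  rfl

lemma measurable_pdfprod : Measurable (fun x : EuclideanSpace ℝ (Fin d) => ∏ i, cgPdf σ (x i)) := by
  exact Finset.measurable_prod _ fun i _ => (measurable_cgPdf σ).comp ((measurable_pi_apply i).comp (WithLp.measurable_ofLp 2 _))

lemma integral_isoGaussian {E : Type*} [NormedAddCommGroup E] [NormedSpace ℝ E]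
    (hσ : 0 < σ) (g : EuclideanSpace ℝ (Fin d) → E) :
    ∫ x, g x ∂(isoGaussianMeasure d σ) =
      ∫ x, (∏ i, cgPdf σ (x i)) • g x ∂(volume : Measure (EuclideanSpace ℝ (Fin d))) := by
  rw [isoGaussian_eq d σ hσ]
  have hm : Measurable (fun x : EuclideanSpace ℝ (Fin d) =>
      Real.toNNReal (∏ i, cgPdf σ (x i))) := measurable_pdfprod.real_toNNReal
  rw [show (fun x : EuclideanSpace ℝ (Fin d) => ENNReal.ofReal (∏ i, cgPdf σ (x i)))
      = fun x => ((Real.toNNReal (∏ i, cgPdf σ (x i)) : ℝ≥0) : ℝ≥0∞) from rfl]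
  rw [integral_withDensity_eq_integral_smul hm]
  congr 1
  ext x
  rw [NNReal.smul_def, Real.coe_toNNReal _ (Finset.prod_nonneg fun i _ => cgPdf_nonneg σ _)]

lemma integrable_isoGaussian_iff {E : Type*} [NormedAddCommGroup E] [NormedSpace ℝ E]
    (hσ : 0 < σ) (g : EuclideanSpace ℝ (Fin d) → E) :
    Integrable g (isoGaussianMeasure d σ) ↔
      Integrable (fun x => (∏ i, cgPdf σ (x i)) • g x)
        (volume : Measure (EuclideanSpace ℝ (Fin d))) := by
  rw [isoGaussian_eq d σ hσ]
  have hm : Measurable (fun x : EuclideanSpace ℝ (Fin d) =>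
      Real.toNNReal (∏ i, cgPdf σ (x i))) := measurable_pdfprod.real_toNNReal
  rw [show (fun x : EuclideanSpace ℝ (Fin d) => ENNReal.ofReal (∏ i, cgPdf σ (x i)))
      = fun x => ((Real.toNNReal (∏ i, cgPdf σ (x i)) : ℝ≥0) : ℝ≥0∞) from rfl]
  rw [integrable_withDensity_iff_integrable_smul hm]
  constructor <;> intro h <;> refine h.congr ?_ <;> filter_upwards with x <;>
    rw [NNReal.smul_def, Real.coe_toNNReal _ (Finset.prod_nonneg fun i _ => cgPdf_nonneg σ _)]

-- pi transfer
lemma integral_euclid_pi {E : Type*} [NormedAddCommGroup E] [NormedSpace ℝ E]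
    (F : EuclideanSpace ℝ (Fin d) → E) :
    ∫ x, F x ∂(volume : Measure (EuclideanSpace ℝ (Fin d))) =
      ∫ z : Fin d → ℝ, F ((EuclideanSpace.measurableEquiv (Fin d)).symm z) := by
  rw [← ((EuclideanSpace.volume_preserving_measurableEquiv (Fin d)).symm).integral_comp']

lemma integrable_euclid_pi_iff {E : Type*} [NormedAddCommGroup E] [NormedSpace ℝ E]
    (F : EuclideanSpace ℝ (Fin d) → E) :
    Integrable F (volume : Measure (EuclideanSpace ℝ (Fin d))) ↔
      Integrable (fun z : Fin d → ℝ => F ((EuclideanSpace.measurableEquiv (Fin d)).symm z)) := by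
  rw [← ((EuclideanSpace.volume_preserving_measurableEquiv (Fin d)).symm).integrable_comp_emb
    (MeasurableEquiv.measurableEmbedding _)]
  rfl

lemma integrable_pdfprod_pi (hσ : 0 < σ) :
    Integrable (fun z : Fin d → ℝ => ∏ k, cgPdf σ (z k))
      (volume : Measure (Fin d → ℝ)) :=
  Integrable.fintype_prod (f := fun _ => cgPdf σ) (fun _ => integrable_cgPdf hσ)

lemma integral_pdfprod_pi (hσ : 0 < σ) :
    ∫ z : Fin d → ℝ, ∏ k, cgPdf σ (z k) = 1 := by
  rw [MeasureTheory.integral_fintype_prod_volume_eq_prod (f := fun _ => cgPdf σ)]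
  simp [integral_cgPdf hσ]

lemma isProbability_isoGaussian (hσ : 0 < σ) :
    IsProbabilityMeasure (isoGaussianMeasure d σ) := by
  constructor
  rw [isoGaussian_eq d σ hσ, withDensity_apply _ MeasurableSet.univ,
    Measure.restrict_univ]
  have hint : Integrable (fun x : EuclideanSpace ℝ (Fin d) => ∏ i, cgPdf σ (x i)) volume := by
    rw [integrable_euclid_pi_iff]
    exact integrable_pdfprod_pi hσ
  rw [← ofReal_integral_eq_lintegral_ofReal hint
    (Eventually.of_forall fun x => Finset.prod_nonneg fun i _ => cgPdf_nonneg σ _)]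
  rw [integral_euclid_pi]
  rw [show (∫ z : Fin d → ℝ, ∏ i, cgPdf σ
    (((EuclideanSpace.measurableEquiv (Fin d)).symm z) i)) = ∫ z : Fin d → ℝ, ∏ i, cgPdf σ (z i)
    from rfl]
  rw [integral_pdfprod_pi hσ]
  simp

/-- integrability and vanishing of first moments -/
lemma coord_moment_isoGaussian (hσ : 0 < σ) (i : Fin d) :
    Integrable (fun x : EuclideanSpace ℝ (Fin d) => x i) (isoGaussianMeasure d σ) ∧
      ∫ x, x i ∂(isoGaussianMeasure d σ) = 0 := by
  set h : Fin d → ℝ → ℝ := fun k t => cgPdf σ t * (if k = i then t else 1) with hh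
  have hid : ∀ z : Fin d → ℝ, ∏ k, h k (z k) = (∏ k, cgPdf σ (z k)) * z i := by
    intro z
    rw [hh, Finset.prod_mul_distrib]
    congr 1
    rw [Finset.prod_ite_eq' Finset.univ i (fun k => z k)]
    simp
  have hint : ∀ k, Integrable (h k) := by
    intro k
    by_cases hk : k = i
    · subst hk
      simp only [hh, if_pos rfl]
      exact integrable_id_mul_cgPdf hσ
    · simp only [hh, if_neg hk, mul_one]
      exact integrable_cgPdf hσ
  have hprod := Integrable.fintype_prod (f := h) hint
  constructor
  · rw [integrable_isoGaussian_iff hσ, integrable_euclid_pi_iff]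
    refine hprod.congr ?_
    filter_upwards with z
    rw [hid z, smul_eq_mul]
    rfl
  · rw [integral_isoGaussian hσ, integral_euclid_pi]
    have : (∫ z : Fin d → ℝ, (∏ k, cgPdf σ
        (((EuclideanSpace.measurableEquiv (Fin d)).symm z) k)) •
          ((EuclideanSpace.measurableEquiv (Fin d)).symm z) i)
        = ∫ z : Fin d → ℝ, ∏ k, h k (z k) := by
      congr 1
      ext z
      rw [hid z, smul_eq_mul]
      rfl
    rw [this, MeasureTheory.integral_fintype_prod_volume_eq_prod (f := h)]
    apply Finset.prod_eq_zero (Finset.mem_univ i)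
    simp only [hh, if_pos rfl]
    exact integral_id_mul_cgPdf hσ

/-- integrability and values of second moments -/
lemma coord_sq_moment_isoGaussian (hσ : 0 < σ) (i j : Fin d) :
    Integrable (fun x : EuclideanSpace ℝ (Fin d) => x i * x j) (isoGaussianMeasure d σ) ∧
      ∫ x, x i * x j ∂(isoGaussianMeasure d σ) = if i = j then σ ^ 2 else 0 := by
  set h : Fin d → ℝ → ℝ :=
    fun k t => cgPdf σ t * ((if k = i then t else 1) * (if k = j then t else 1)) with hh
  have hid : ∀ z : Fin d → ℝ, ∏ k, h k (z k) = (∏ k, cgPdf σ (z k)) * (z i * z j) := by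
    intro z
    rw [hh, Finset.prod_mul_distrib, Finset.prod_mul_distrib]
    congr 1
    rw [Finset.prod_ite_eq' Finset.univ i (fun k => z k),
      Finset.prod_ite_eq' Finset.univ j (fun k => z k)]
    simp
  have hint : ∀ k, Integrable (h k) := by
    intro k
    by_cases hki : k = i <;> by_cases hkj : k = j
    · subst hki; subst hkj
      simp only [hh, if_pos rfl]
      exact (integrable_sq_mul_cgPdf hσ).congr
        (by filter_upwards with t; simp only [eq_self_iff_true, if_true]; ring)
    · subst hki
      simp only [hh, if_pos rfl, if_neg hkj, mul_one]
      exact integrable_id_mul_cgPdf hσ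
    · subst hkj
      simp only [hh, if_pos rfl, if_neg hki, one_mul]
      exact integrable_id_mul_cgPdf hσ
    · simp only [hh, if_neg hki, if_neg hkj, mul_one]
      exact integrable_cgPdf hσ
  have hprod := Integrable.fintype_prod (f := h) hint
  constructor
  · rw [integrable_isoGaussian_iff hσ, integrable_euclid_pi_iff]
    refine hprod.congr ?_
    filter_upwards with z
    rw [hid z, smul_eq_mul]
    rfl
  · rw [integral_isoGaussian hσ, integral_euclid_pi]
    have : (∫ z : Fin d → ℝ, (∏ k, cgPdf σ
        (((EuclideanSpace.measurableEquiv (Fin d)).symm z) k)) •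
          (((EuclideanSpace.measurableEquiv (Fin d)).symm z) i *
            ((EuclideanSpace.measurableEquiv (Fin d)).symm z) j))
        = ∫ z : Fin d → ℝ, ∏ k, h k (z k) := by
      congr 1
      ext z
      rw [hid z, smul_eq_mul]
      rfl
    rw [this, MeasureTheory.integral_fintype_prod_volume_eq_prod (f := h)]
    by_cases hij : i = j
    · subst hij
      rw [if_pos rfl]
      rw [Finset.prod_eq_single i ?_ (by simp)]
      · simp only [hh, eq_self_iff_true, if_true]
        rw [show (fun x : ℝ => cgPdf σ x * (x * x)) = fun x : ℝ => cgPdf σ x * x ^ 2 by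
          ext t; ring]
        exact integral_sq_mul_cgPdf hσ
      · intro k _ hk
        simp only [hh, if_neg hk, mul_one]
        exact integral_cgPdf hσ
    · rw [if_neg hij]
      apply Finset.prod_eq_zero (Finset.mem_univ i)
      simp only [hh, if_pos rfl, if_neg hij, mul_one]
      exact integral_id_mul_cgPdf hσ

lemma sqrt_sum_sq_le_sum_abs {d : ℕ} (z : Fin d → ℝ) :
    Real.sqrt (∑ i, |z i| ^ 2) ≤ ∑ i, |z i| := by
  have h1 : (∑ i, |z i| ^ 2) ≤ (∑ i, |z i|) ^ 2 :=
    Finset.sum_sq_le_sq_sum_of_nonneg (fun i _ => abs_nonneg _)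
  calc Real.sqrt (∑ i, |z i| ^ 2) ≤ Real.sqrt ((∑ i, |z i|) ^ 2) := Real.sqrt_le_sqrt h1
    _ = ∑ i, |z i| := Real.sqrt_sq (Finset.sum_nonneg fun i _ => abs_nonneg _)

lemma integrable_id_isoGaussian (hσ : 0 < σ) :
    Integrable (fun x : EuclideanSpace ℝ (Fin d) => x) (isoGaussianMeasure d σ) := by
  rw [integrable_isoGaussian_iff hσ, integrable_euclid_pi_iff]
  have hmeas : AEStronglyMeasurable
      (fun z : Fin d → ℝ => (∏ k, cgPdf σ
        (((EuclideanSpace.measurableEquiv (Fin d)).symm z) k)) •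
          (EuclideanSpace.measurableEquiv (Fin d)).symm z)
      (volume : Measure (Fin d → ℝ)) := by
    apply Measurable.aestronglyMeasurable
    apply Measurable.smul (f := fun z => ∏ k, cgPdf σ
          (((EuclideanSpace.measurableEquiv (Fin d)).symm z) k))
        (g := fun z => (EuclideanSpace.measurableEquiv (Fin d)).symm z)
    · exact Finset.measurable_prod _ fun k _ =>
        (measurable_cgPdf σ).comp ((measurable_pi_apply k).comp
          ((WithLp.measurable_ofLp 2 _).comp (EuclideanSpace.measurableEquiv (Fin d)).symm.measurable))
    · exact (EuclideanSpace.measurableEquiv (Fin d)).symm.measurable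
  have base : ∀ i : Fin d, Integrable
      (fun z : Fin d → ℝ => |(∏ k, cgPdf σ (z k)) * z i|) (volume : Measure (Fin d → ℝ)) := by
    intro i
    have h := (coord_moment_isoGaussian (d := d) hσ i).1
    rw [integrable_isoGaussian_iff hσ, integrable_euclid_pi_iff] at h
    exact h.abs
  refine Integrable.mono'
    (integrable_finset_sum Finset.univ (fun i _ => base i)) hmeas ?_
  filter_upwards with z
  rw [norm_smul]
  have h1 : ‖(EuclideanSpace.measurableEquiv (Fin d)).symm z‖
      = Real.sqrt (∑ i, |z i| ^ 2) := by
    rw [EuclideanSpace.norm_eq]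
    congr 1
  rw [h1, Real.norm_eq_abs,
    abs_of_nonneg (Finset.prod_nonneg fun k _ => cgPdf_nonneg σ _)]
  calc (∏ k, cgPdf σ (((EuclideanSpace.measurableEquiv (Fin d)).symm z) k)) *
        Real.sqrt (∑ i, |z i| ^ 2)
      ≤ (∏ k, cgPdf σ (z k)) * ∑ i, |z i| := by
        refine mul_le_mul_of_nonneg_left (sqrt_sum_sq_le_sum_abs z) ?_
        exact Finset.prod_nonneg fun k _ => cgPdf_nonneg σ _
    _ = ∑ i, |(∏ k, cgPdf σ (z k)) * z i| := by
        rw [Finset.mul_sum]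
        congr 1
        ext i
        rw [abs_mul, abs_of_nonneg (Finset.prod_nonneg fun k _ => cgPdf_nonneg σ _)]

lemma inner_eq_sum (y x : EuclideanSpace ℝ (Fin d)) :
    (inner ℝ y x : ℝ) = ∑ i, y i * x i := by
  rw [PiLp.inner_apply]
  exact Finset.sum_congr rfl fun i _ => by
    rw [RCLike.inner_apply, starRingEnd_apply, star_trivial, mul_comm]

lemma integral_inner_isoGaussian (hσ : 0 < σ) (y : EuclideanSpace ℝ (Fin d)) :
    Integrable (fun x : EuclideanSpace ℝ (Fin d) => (inner ℝ y x : ℝ)) (isoGaussianMeasure d σ) ∧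
      ∫ x, (inner ℝ y x : ℝ) ∂(isoGaussianMeasure d σ) = 0 := by
  have hint : Integrable (fun x : EuclideanSpace ℝ (Fin d) => ∑ i, y i * x i)
      (isoGaussianMeasure d σ) :=
    integrable_finset_sum _ fun i _ => ((coord_moment_isoGaussian hσ i).1).const_mul (y i)
  constructor
  · exact hint.congr (by filter_upwards with x; rw [inner_eq_sum])
  · rw [show (fun x : EuclideanSpace ℝ (Fin d) => (inner ℝ y x : ℝ))
        = fun x => ∑ i, y i * x i from funext fun x => inner_eq_sum y x]
    rw [integral_finset_sum _ fun i _ =>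
      ((coord_moment_isoGaussian hσ i).1).const_mul (y i)]
    refine Finset.sum_eq_zero fun i _ => ?_
    rw [integral_const_mul, (coord_moment_isoGaussian hσ i).2, mul_zero]

lemma integral_inner_sq_isoGaussian (hσ : 0 < σ) (y : EuclideanSpace ℝ (Fin d)) :
    Integrable (fun x : EuclideanSpace ℝ (Fin d) => (inner ℝ y x : ℝ) ^ 2)
        (isoGaussianMeasure d σ) ∧
      ∫ x, (inner ℝ y x : ℝ) ^ 2 ∂(isoGaussianMeasure d σ) = σ ^ 2 * ‖y‖ ^ 2 := by
  have hexp : ∀ x : EuclideanSpace ℝ (Fin d),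
      (inner ℝ y x : ℝ) ^ 2 = ∑ i, ∑ j, (y i * y j) * (x i * x j) := by
    intro x
    rw [inner_eq_sum, sq, Finset.sum_mul_sum]
    congr 1; ext i; congr 1; ext j; ring
  have hint : Integrable (fun x : EuclideanSpace ℝ (Fin d) =>
      ∑ i, ∑ j, (y i * y j) * (x i * x j)) (isoGaussianMeasure d σ) :=
    integrable_finset_sum _ fun i _ => integrable_finset_sum _ fun j _ =>
      ((coord_sq_moment_isoGaussian hσ i j).1).const_mul _
  constructor
  · exact hint.congr (by filter_upwards with x; rw [hexp])
  · rw [show (fun x : EuclideanSpace ℝ (Fin d) => (inner ℝ y x : ℝ) ^ 2)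
        = fun x => ∑ i, ∑ j, (y i * y j) * (x i * x j) from funext hexp]
    rw [integral_finset_sum _ fun i _ => integrable_finset_sum _ fun j _ =>
      ((coord_sq_moment_isoGaussian hσ i j).1).const_mul _]
    have hsum : ∀ i : Fin d, (∫ x, ∑ j, (y i * y j) * (x i * x j)
        ∂(isoGaussianMeasure d σ)) = y i * y i * σ ^ 2 := by
      intro i
      rw [integral_finset_sum _ fun j _ =>
        ((coord_sq_moment_isoGaussian hσ i j).1).const_mul _]
      have : ∀ j : Fin d, (∫ x, (y i * y j) * (x i * x j) ∂(isoGaussianMeasure d σ))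
          = if i = j then y i * y j * σ ^ 2 else 0 := by
        intro j
        rw [integral_const_mul, (coord_sq_moment_isoGaussian hσ i j).2]
        by_cases h : i = j
        · rw [if_pos h, if_pos h]
        · rw [if_neg h, if_neg h, mul_zero]
      simp_rw [this]
      rw [Finset.sum_ite_eq Finset.univ i (fun j => y i * y j * σ ^ 2)]
      simp
    simp_rw [hsum]
    have : ‖y‖ ^ 2 = ∑ i, y i * y i := by
      rw [← real_inner_self_eq_norm_sq, inner_eq_sum]
    rw [this, Finset.mul_sum]
    exact Finset.sum_congr rfl fun i _ => by ring

lemma memLp_inner_isoGaussian (hσ : 0 < σ) (y : EuclideanSpace ℝ (Fin d)) :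
    MemLp (fun x : EuclideanSpace ℝ (Fin d) => (inner ℝ y x : ℝ)) 2 (isoGaussianMeasure d σ) := by
  have hmeas : AEStronglyMeasurable (fun x : EuclideanSpace ℝ (Fin d) => (inner ℝ y x : ℝ))
      (isoGaussianMeasure d σ) :=
    (continuous_const.inner continuous_id).aestronglyMeasurable
  exact (memLp_two_iff_integrable_sq hmeas).2 (integral_inner_sq_isoGaussian hσ y).1

/-- Bound on the center of mass for the Gaussian distribution: if `S` has positive measure
`μ(S)` under `μ = N(0, σ²I_d)`, then its center of mass `c_S` satisfies
`‖c_S‖ ≤ 2σ·√(μ(ℝ^d \ S))/μ(S)`. -/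
theorem center_of_mass_bound_gaussian (d : ℕ) (hd : 1 ≤ d) (σ : ℝ) (hσ : 0 < σ)
    (S : Set (EuclideanSpace ℝ (Fin d))) (hS : MeasurableSet S)
    (hpos : 0 < (isoGaussianMeasure d σ S).toReal) :
    ‖((isoGaussianMeasure d σ S).toReal)⁻¹ •
        ∫ x in S, x ∂(isoGaussianMeasure d σ)‖ ≤
      2 * σ * Real.sqrt ((isoGaussianMeasure d σ Sᶜ).toReal) /
        (isoGaussianMeasure d σ S).toReal := by
  set μ := isoGaussianMeasure d σ with hμ
  haveI : IsProbabilityMeasure μ := isProbability_isoGaussian hσ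
  set y := ∫ x in S, x ∂μ with hy
  set mS := (μ S).toReal with hmS
  set mC := (μ Sᶜ).toReal with hmC
  have hmC0 : 0 ≤ mC := ENNReal.toReal_nonneg
  have hintid : Integrable (fun x : EuclideanSpace ℝ (Fin d) => x) μ :=
    integrable_id_isoGaussian hσ
  have hinner_int := (integral_inner_isoGaussian hσ y).1
  -- Step 1: ‖y‖² = ∫_S ⟪y, x⟫
  have h1 : (‖y‖ : ℝ) ^ 2 = ∫ x in S, (inner ℝ y x : ℝ) ∂μ := by
    rw [← real_inner_self_eq_norm_sq]
    rw [integral_inner (hintid.restrict) y]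
  -- Step 2: ∫_S ⟪y,x⟫ = - ∫_{Sᶜ} ⟪y,x⟫
  have h2 : ∫ x in S, (inner ℝ y x : ℝ) ∂μ = - ∫ x in Sᶜ, (inner ℝ y x : ℝ) ∂μ := by
    have hadd := integral_add_compl hS hinner_int
    rw [(integral_inner_isoGaussian hσ y).2] at hadd
    linarith
  -- Step 3: Cauchy-Schwarz on Sᶜ
  have hCS : ∫ x in Sᶜ, ‖(inner ℝ y x : ℝ)‖ ∂μ ≤ σ * ‖y‖ * Real.sqrt mC := by
    have hpq : Real.HolderConjugate 2 2 := Real.HolderConjugate.two_two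
    have hf : MemLp (fun x : EuclideanSpace ℝ (Fin d) => (inner ℝ y x : ℝ))
        (ENNReal.ofReal 2) (μ.restrict Sᶜ) := by
      rw [show ENNReal.ofReal (2:ℝ) = 2 by norm_num]
      exact (memLp_inner_isoGaussian hσ y).restrict _
    have hg : MemLp (fun _ : EuclideanSpace ℝ (Fin d) => (1 : ℝ))
        (ENNReal.ofReal 2) (μ.restrict Sᶜ) := memLp_const 1
    have := integral_mul_norm_le_Lp_mul_Lq (μ := μ.restrict Sᶜ) hpq hf hg
    simp only [norm_one, mul_one] at this
    refine le_trans this ?_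
    have e1 : ∫ x in Sᶜ, ‖(inner ℝ y x : ℝ)‖ ^ (2:ℝ) ∂μ
        = ∫ x in Sᶜ, (inner ℝ y x : ℝ) ^ 2 ∂μ := by
      congr 1
      ext x
      rw [show ((2:ℝ) = ((2:ℕ):ℝ)) by norm_num, Real.rpow_natCast, Real.norm_eq_abs, sq_abs]
    have e2 : ∫ x in Sᶜ, (1:ℝ) ^ (2:ℝ) ∂μ = mC := by
      simp only [Real.one_rpow]
      rw [setIntegral_const, smul_eq_mul, mul_one, hmC]
      rfl
    rw [e1, e2]
    have hb1 : ∫ x in Sᶜ, (inner ℝ y x : ℝ) ^ 2 ∂μ ≤ σ ^ 2 * ‖y‖ ^ 2 := by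
      rw [← (integral_inner_sq_isoGaussian hσ y).2]
      refine setIntegral_le_integral (integral_inner_sq_isoGaussian hσ y).1 ?_
      filter_upwards with x
      positivity
    have hnn : 0 ≤ ∫ x in Sᶜ, (inner ℝ y x : ℝ) ^ 2 ∂μ := by
      refine integral_nonneg fun x => by positivity
    calc (∫ x in Sᶜ, (inner ℝ y x : ℝ) ^ 2 ∂μ) ^ ((1:ℝ)/2) * mC ^ ((1:ℝ)/2)
        ≤ (σ ^ 2 * ‖y‖ ^ 2) ^ ((1:ℝ)/2) * mC ^ ((1:ℝ)/2) := by
          refine mul_le_mul_of_nonneg_right ?_ (Real.rpow_nonneg hmC0 _)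
          exact Real.rpow_le_rpow hnn hb1 (by norm_num)
      _ = σ * ‖y‖ * Real.sqrt mC := by
          rw [← Real.sqrt_eq_rpow, ← Real.sqrt_eq_rpow]
          rw [show σ ^ 2 * ‖y‖ ^ 2 = (σ * ‖y‖) ^ 2 by ring]
          rw [Real.sqrt_sq (by positivity)]
  -- Step 4: ‖y‖ ≤ σ √mC
  have h4 : ‖y‖ ≤ σ * Real.sqrt mC := by
    have hb : ‖y‖ ^ 2 ≤ σ * ‖y‖ * Real.sqrt mC := by
      rw [h1, h2]
      calc - ∫ x in Sᶜ, (inner ℝ y x : ℝ) ∂μ ≤ ‖∫ x in Sᶜ, (inner ℝ y x : ℝ) ∂μ‖ := by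
            rw [Real.norm_eq_abs]; exact neg_le_abs _
        _ ≤ ∫ x in Sᶜ, ‖(inner ℝ y x : ℝ)‖ ∂μ := norm_integral_le_integral_norm _
        _ ≤ σ * ‖y‖ * Real.sqrt mC := hCS
    rcases eq_or_lt_of_le (norm_nonneg y) with h0 | h0
    · rw [← h0]; positivity
    · have := (mul_le_mul_iff_left₀ h0).1 (by nlinarith : ‖y‖ * ‖y‖ ≤ (σ * Real.sqrt mC) * ‖y‖)
      exact this
  -- conclude
  rw [norm_smul, Real.norm_eq_abs, abs_of_nonneg (inv_nonneg.2 hpos.le)]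
  rw [div_eq_mul_inv, mul_comm (2 * σ * Real.sqrt mC) mS⁻¹]
  refine mul_le_mul_of_nonneg_left ?_ (inv_nonneg.2 hpos.le)
  calc ‖y‖ ≤ σ * Real.sqrt mC := h4
    _ ≤ 2 * σ * Real.sqrt mC := by nlinarith [Real.sqrt_nonneg mC, hσ.le]
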